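/- Let r be a real polynomial in one variable with r(0) = 1, and suppose x, y are real numbers with r(x) > 0, r(y) > 0 and r(x) ≠ r(y). Let a, c > 0, b = 2√(a c r(x) r(y))/(r(x)+r(y)), t = −√(a r(x)/(c r(y))), B = [[a, b],[b, c]], X = diag(x, y), v = (1, t)ᵀ. Then r(X)B + B·r(X) ⪰ 0 and (r(X)B + B·r(X))v = 0. -/

import Mathlib

open Matrix

theorem aeval_diag (r : Polynomial ℝ) (x y : ℝ) :
    Polynomial.aeval (Matrix.diagonal ![x, y]) r
      = Matrix.diagonal ![r.eval x, r.eval y] := by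
  have key : (Polynomial.aeval ![x,y]) r = ![r.eval x, r.eval y] := by
    funext i
    have := Polynomial.aeval_algHom_apply (Pi.evalAlgHom ℝ (fun _ : Fin 2 => ℝ) i) ![x,y] r
    simp only [Pi.evalAlgHom_apply] at this
    rw [← this]
    fin_cases i <;> simp [Polynomial.coe_aeval_eq_eval]
  rw [show Matrix.diagonal ![x,y] = Matrix.diagonalAlgHom (n := Fin 2) (α := ℝ) ℝ ![x,y] from rfl,
    Polynomial.aeval_algHom_apply, Matrix.diagonalAlgHom_apply, key]

theorem boundary_witness (r : Polynomial ℝ) (hr0 : r.eval 0 = 1) (x y a c : ℝ)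
    (hx : 0 < r.eval x) (hy : 0 < r.eval y) (hxy : r.eval x ≠ r.eval y)
    (ha : 0 < a) (hc : 0 < c) (b t : ℝ)
    (hb : b = 2 * Real.sqrt (a * c * r.eval x * r.eval y) / (r.eval x + r.eval y))
    (ht : t = - Real.sqrt (a * r.eval x / (c * r.eval y)))
    (X : Matrix (Fin 2) (Fin 2) ℝ) (hX : X = Matrix.diagonal ![x, y])
    (B : Matrix (Fin 2) (Fin 2) ℝ) (hB : B = !![a, b; b, c])
    (RX : Matrix (Fin 2) (Fin 2) ℝ) (hRX : RX = Polynomial.aeval X r) :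
    (RX * B + B * RX).PosSemidef ∧ (RX * B + B * RX) *ᵥ ![1, t] = 0 := by
  set p := r.eval x with hp
  set q := r.eval y with hq
  set s := Real.sqrt (a * p) with hs
  set u := Real.sqrt (c * q) with hu
  have hap : (0:ℝ) < a * p := mul_pos ha hx
  have hcq : (0:ℝ) < c * q := mul_pos hc hy
  have hs2 : s ^ 2 = a * p := Real.sq_sqrt hap.le
  have hu2 : u ^ 2 = c * q := Real.sq_sqrt hcq.le
  have hspos : 0 < s := Real.sqrt_pos.mpr hap
  have hupos : 0 < u := Real.sqrt_pos.mpr hcq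
  have hpq : 0 < p + q := add_pos hx hy
  have hsqrt1 : Real.sqrt (a * c * p * q) = s * u := by
    rw [hs, hu, ← Real.sqrt_mul hap.le]
    ring_nf
  have hsqrt2 : Real.sqrt (a * p / (c * q)) = s / u := by
    rw [hs, hu, Real.sqrt_div hap.le]
  have hRX' : RX = Matrix.diagonal ![p, q] := by
    rw [hRX, hX, aeval_diag]
  have hbpq : b * (p + q) = 2 * (s * u) := by
    rw [hb, hsqrt1]
    field_simp
  have hM : RX * B + B * RX = !![2 * (a * p), 2 * (s * u); 2 * (s * u), 2 * (c * q)] := by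
    have hd : Matrix.diagonal ![p, q] = !![p, 0; 0, q] := by
      ext i j; fin_cases i <;> fin_cases j <;> simp [Matrix.diagonal_apply]
    rw [hRX', hB, hd, Matrix.mul_fin_two, Matrix.mul_fin_two]
    ext i j
    fin_cases i <;> fin_cases j <;> simp <;> linarith [hbpq]
  rw [hM]
  have ht' : t = -(s / u) := by rw [ht, hsqrt2]
  constructor
  · rw [Matrix.posSemidef_iff_dotProduct_mulVec]
    constructor
    · ext i j
      fin_cases i <;> fin_cases j <;> simp [Matrix.conjTranspose, Matrix.transpose]
    · intro z
      have hz : star z ⬝ᵥ (!![2 * (a * p), 2 * (s * u); 2 * (s * u), 2 * (c * q)] *ᵥ z)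
          = 2 * (s * z 0 + u * z 1) ^ 2 := by
        simp [dotProduct, Matrix.mulVec, Fin.sum_univ_two]
        linear_combination (-2 * z 0 ^ 2) * hs2 + (-2 * z 1 ^ 2) * hu2
      rw [hz]
      positivity
  · have h0 : 2 * (a * p) * 1 + 2 * (s * u) * t = 0 := by
      rw [ht']
      field_simp
      linear_combination (-2) * hs2
    have h1 : 2 * (s * u) * 1 + 2 * (c * q) * t = 0 := by
      rw [ht']
      field_simp
      linear_combination 2 * s * hu2
    funext i
    fin_cases i <;>
      simp [Matrix.mulVec, dotProduct, Fin.sum_univ_two] <;> linarith [h0, h1]
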